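/- The map μ ↦ E(μ) is (real-)differentiable on the open unit disc {μ ∈ ℂ : |μ| < 1}, viewed as a map from ℂ as a real vector space into the 2×2 real matrices, and for every μ with |μ| < 1 and all w₁, w₂ ∈ ℂ, trace( E(μ)⁻¹ · (DE(μ) w₁) · E(μ)⁻¹ · (DE(μ) w₂) ) = 8 · Re(w₁ · conj(w₂)) / (1 − |μ|²)², where DE(μ) denotes the Fréchet derivative of E at μ. (Equivalently, in index notation, Δ₁e_{ij} Δ₂e^{ij} = −4(1 − |μ|²)⁻²(Δ₁μ Δ₂μ̄ + Δ₁μ̄ Δ₂μ) for variations of the conformal 2-metric e = E(μ) and its inverse.) -/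

import Mathlib

/-- The conformal 2-metric parametrized by a complex number `μ` with `|μ| < 1`:
`E(μ) = (1 − |μ|²)⁻¹ · [[|1 + μ|², 2·Im μ], [2·Im μ, |1 − μ|²]]`. -/
noncomputable def conformalMetric (μ : ℂ) : Matrix (Fin 2) (Fin 2) ℝ :=
  (1 - ‖μ‖ ^ 2)⁻¹ •
    !![‖1 + μ‖ ^ 2, 2 * μ.im; 2 * μ.im, ‖1 - μ‖ ^ 2]

attribute [local instance] Matrix.normedAddCommGroup Matrix.normedSpace

namespace CMaux

noncomputable def n1 (x y : ℝ) : ℝ := (1+x)^2 + y^2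
noncomputable def n3 (x y : ℝ) : ℝ := (1-x)^2 + y^2
noncomputable def rr (x y : ℝ) : ℝ := 1 - x^2 - y^2

noncomputable def Li (p q : ℝ) : ℂ →L[ℝ] ℝ :=
  p • (Complex.reCLM : ℂ →L[ℝ] ℝ) + q • Complex.imCLM

@[simp] lemma Li_apply (p q : ℝ) (w : ℂ) : Li p q w = p * w.re + q * w.im := by
  simp [Li]

lemma sq_abs' (z : ℂ) : ‖z‖ ^ 2 = z.re^2 + z.im^2 := by
  rw [Complex.sq_norm, Complex.normSq_apply]; ring

lemma rr_pos {μ : ℂ} (h : ‖μ‖ < 1) : 0 < rr μ.re μ.im := by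
  have h2 : μ.re^2 + μ.im^2 < 1 := by
    have := sq_abs' μ
    nlinarith [norm_nonneg μ]
  unfold rr; linarith

variable {μ : ℂ}

lemma hre : HasFDerivAt (fun z : ℂ => z.re) (Li 1 0) μ := by
  have := (Complex.reCLM : ℂ →L[ℝ] ℝ).hasFDerivAt (x := μ)
  refine this.congr_fderiv ?_
  exact ContinuousLinearMap.ext fun w => by simp

lemma him : HasFDerivAt (fun z : ℂ => z.im) (Li 0 1) μ := by
  have := (Complex.imCLM : ℂ →L[ℝ] ℝ).hasFDerivAt (x := μ)
  refine this.congr_fderiv ?_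
  exact ContinuousLinearMap.ext fun w => by simp

lemma hn1 : HasFDerivAt (fun z : ℂ => n1 z.re z.im) (Li (2*(1+μ.re)) (2*μ.im)) μ := by
  have h := (((hre (μ := μ)).const_add 1).mul ((hre (μ := μ)).const_add 1)).add
    ((him (μ := μ)).mul (him (μ := μ)))
  rw [show (fun z : ℂ => n1 z.re z.im) = (fun z : ℂ => (1+z.re)*(1+z.re)+z.im*z.im) from
    funext fun z => by simp [n1]; ring]
  refine h.congr_fderiv ?_
  refine ContinuousLinearMap.ext fun w => ?_
  simp; ring

lemma hn3 : HasFDerivAt (fun z : ℂ => n3 z.re z.im) (Li (-(2*(1-μ.re))) (2*μ.im)) μ := by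
  have h := (((hre (μ := μ)).const_sub 1).mul ((hre (μ := μ)).const_sub 1)).add
    ((him (μ := μ)).mul (him (μ := μ)))
  rw [show (fun z : ℂ => n3 z.re z.im) = (fun z : ℂ => (1-z.re)*(1-z.re)+z.im*z.im) from
    funext fun z => by simp [n3]; ring]
  refine h.congr_fderiv ?_
  refine ContinuousLinearMap.ext fun w => ?_
  simp; ring

lemma hrr : HasFDerivAt (fun z : ℂ => rr z.re z.im) (Li (-(2*μ.re)) (-(2*μ.im))) μ := by
  have h := ((((hre (μ := μ)).mul (hre (μ := μ))).add
    ((him (μ := μ)).mul (him (μ := μ)))).const_sub 1)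
  rw [show (fun z : ℂ => rr z.re z.im) = (fun z : ℂ => 1 - (z.re*z.re+z.im*z.im)) from
    funext fun z => by simp [rr]; ring]
  refine h.congr_fderiv ?_
  refine ContinuousLinearMap.ext fun w => ?_
  simp; ring

lemma hrrinv (h : ‖μ‖ < 1) :
    HasFDerivAt (fun z : ℂ => (rr z.re z.im)⁻¹)
      (Li (2*μ.re/(rr μ.re μ.im)^2) (2*μ.im/(rr μ.re μ.im)^2)) μ := by
  have hr0 : rr μ.re μ.im ≠ 0 := (rr_pos h).ne'
  have h2 := (hasFDerivAt_inv' (𝕜 := ℝ) hr0).comp μ (hrr (μ := μ))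
  refine h2.congr_fderiv ?_
  refine ContinuousLinearMap.ext fun w => ?_
  simp [ContinuousLinearMap.mulLeftRight_apply]
  field_simp
  ring


noncomputable def Exm (x y : ℝ) : Matrix (Fin 2) (Fin 2) ℝ :=
  !![ (2*(1+x)*rr x y + 2*x*n1 x y)/(rr x y)^2, 4*x*y/(rr x y)^2;
      4*x*y/(rr x y)^2, (-(2*(1-x))*rr x y + 2*x*n3 x y)/(rr x y)^2 ]

noncomputable def Eym (x y : ℝ) : Matrix (Fin 2) (Fin 2) ℝ :=
  !![ (2*y*rr x y + 2*y*n1 x y)/(rr x y)^2, (2*rr x y + 4*y^2)/(rr x y)^2;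
      (2*rr x y + 4*y^2)/(rr x y)^2, (2*y*rr x y + 2*y*n3 x y)/(rr x y)^2 ]

noncomputable def DE (μ : ℂ) : ℂ →L[ℝ] Matrix (Fin 2) (Fin 2) ℝ :=
  Complex.reCLM.smulRight (Exm μ.re μ.im) + Complex.imCLM.smulRight (Eym μ.re μ.im)

@[simp] lemma DE_apply (μ w : ℂ) :
    DE μ w = w.re • Exm μ.re μ.im + w.im • Eym μ.re μ.im := by
  simp [DE]

lemma conformalMetric_eq : conformalMetric = fun μ : ℂ =>
    (n1 μ.re μ.im * (rr μ.re μ.im)⁻¹) • (!![1,0;0,0] : Matrix (Fin 2) (Fin 2) ℝ)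
    + ((2 * μ.im) * (rr μ.re μ.im)⁻¹) • (!![0,1;1,0] : Matrix (Fin 2) (Fin 2) ℝ)
    + (n3 μ.re μ.im * (rr μ.re μ.im)⁻¹) • (!![0,0;0,1] : Matrix (Fin 2) (Fin 2) ℝ) := by
  funext μ
  have e1 : ‖1+μ‖ ^ 2 = n1 μ.re μ.im := by
    rw [sq_abs']; simp [n1, Complex.add_re, Complex.add_im]; try ring
  have e3 : ‖1-μ‖ ^ 2 = n3 μ.re μ.im := by
    rw [sq_abs']; simp [n3, Complex.sub_re, Complex.sub_im]; try ring
  have er : 1 - ‖μ‖ ^ 2 = rr μ.re μ.im := by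
    rw [sq_abs']; simp [rr]; ring
  ext i j
  fin_cases i <;> fin_cases j <;>
    · simp [conformalMetric, e1, e3, er]
      ring

lemma hasFDerivAt_cm (h : ‖μ‖ < 1) :
    HasFDerivAt conformalMetric (DE μ) μ := by
  have hr0 : rr μ.re μ.im ≠ 0 := (rr_pos h).ne'
  have hf1 := ((hn1 (μ := μ)).mul (hrrinv h)).smul_const
    (!![1,0;0,0] : Matrix (Fin 2) (Fin 2) ℝ)
  have hf2 := (((him (μ := μ)).const_mul 2).mul (hrrinv h)).smul_const
    (!![0,1;1,0] : Matrix (Fin 2) (Fin 2) ℝ)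
  have hf3 := ((hn3 (μ := μ)).mul (hrrinv h)).smul_const
    (!![0,0;0,1] : Matrix (Fin 2) (Fin 2) ℝ)
  have H := (hf1.add hf2).add hf3
  rw [conformalMetric_eq]
  refine H.congr_fderiv ?_
  refine ContinuousLinearMap.ext fun w => ?_
  erw [DE_apply]
  ext i j
  fin_cases i <;> fin_cases j <;>
    · simp [DE, Exm, Eym]
      field_simp
      ring

noncomputable def Einv (μ : ℂ) : Matrix (Fin 2) (Fin 2) ℝ :=
  (rr μ.re μ.im)⁻¹ • !![n3 μ.re μ.im, -(2*μ.im); -(2*μ.im), n1 μ.re μ.im]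

lemma cm_inv (h : ‖μ‖ < 1) : (conformalMetric μ)⁻¹ = Einv μ := by
  have hr0 : rr μ.re μ.im ≠ 0 := (rr_pos h).ne'
  refine Matrix.inv_eq_right_inv ?_
  rw [conformalMetric_eq]
  ext i j
  fin_cases i <;> fin_cases j <;>
    · simp [Einv, Matrix.mul_apply, Fin.sum_univ_two, Matrix.one_apply, n1, n3]
      field_simp
      ring_nf
      try (unfold rr; ring_nf)


noncomputable def Pm (x y : ℝ) : Matrix (Fin 2) (Fin 2) ℝ :=
  !![(1-x)^2+y^2, -(2*y); -(2*y), (1+x)^2+y^2]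

noncomputable def Qx (x y : ℝ) : Matrix (Fin 2) (Fin 2) ℝ :=
  !![2*(1+x)*(1-x^2-y^2) + 2*x*((1+x)^2+y^2), 4*x*y;
     4*x*y, -(2*(1-x))*(1-x^2-y^2) + 2*x*((1-x)^2+y^2)]

noncomputable def Qy (x y : ℝ) : Matrix (Fin 2) (Fin 2) ℝ :=
  !![2*y*(1-x^2-y^2) + 2*y*((1+x)^2+y^2), 2*(1-x^2-y^2) + 4*y^2;
     2*(1-x^2-y^2) + 4*y^2, 2*y*(1-x^2-y^2) + 2*y*((1-x)^2+y^2)]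

set_option maxHeartbeats 1000000 in
lemma key (x y a b c d : ℝ) :
    Matrix.trace (Pm x y * (a • Qx x y + b • Qy x y) * Pm x y * (c • Qx x y + d • Qy x y)) =
      8 * (1-x^2-y^2)^4 * (a*c + b*d) := by
  simp [Pm, Qx, Qy, Matrix.trace_fin_two, Matrix.mul_apply, Fin.sum_univ_two]
  ring

lemma Exm_eq (x y : ℝ) : Exm x y = ((rr x y)^2)⁻¹ • Qx x y := by
  ext i j
  fin_cases i <;> fin_cases j <;>
    simp [Exm, Qx, rr, n1, n3, div_eq_inv_mul]

lemma Eym_eq (x y : ℝ) : Eym x y = ((rr x y)^2)⁻¹ • Qy x y := by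
  ext i j
  fin_cases i <;> fin_cases j <;>
    simp [Eym, Qy, rr, n1, n3, div_eq_inv_mul]

lemma Einv_eq (μ : ℂ) : Einv μ = (rr μ.re μ.im)⁻¹ • Pm μ.re μ.im := by
  simp [Einv, Pm, n1, n3]

end CMaux


/-- The map `μ ↦ E(μ)` is real-differentiable on the open unit disc (as a map from ℂ
viewed as a real vector space into the real 2×2 matrices), and for all `|μ| < 1` and
`w₁, w₂ ∈ ℂ` the Fréchet derivative `DE(μ)` satisfies
`trace(E(μ)⁻¹·(DE(μ)w₁)·E(μ)⁻¹·(DE(μ)w₂)) = 8·Re(w₁·conj w₂)/(1 − |μ|²)²`;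
equivalently `Δ₁e_{ij} Δ₂e^{ij} = −4(1−|μ|²)⁻²(Δ₁μ Δ₂μ̄ + Δ₁μ̄ Δ₂μ)`. -/
theorem conformalMetric_differentiable_trace_identity :
    (∀ μ : ℂ, ‖μ‖ < 1 → DifferentiableAt ℝ conformalMetric μ) ∧
      ∀ μ : ℂ, ‖μ‖ < 1 → ∀ w₁ w₂ : ℂ,
        Matrix.trace ((conformalMetric μ)⁻¹ * fderiv ℝ conformalMetric μ w₁ *
            (conformalMetric μ)⁻¹ * fderiv ℝ conformalMetric μ w₂) =
          8 * (w₁ * (starRingEnd ℂ) w₂).re / (1 - ‖μ‖ ^ 2) ^ 2 := by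
  constructor
  · exact fun μ h => (CMaux.hasFDerivAt_cm h).differentiableAt
  · intro μ h w₁ w₂
    have hr0 : CMaux.rr μ.re μ.im ≠ 0 := (CMaux.rr_pos h).ne'
    have er : 1 - ‖μ‖ ^ 2 = CMaux.rr μ.re μ.im := by
      rw [CMaux.sq_abs']; unfold CMaux.rr; ring
    have hD : ∀ w : ℂ, CMaux.DE μ w
        = ((CMaux.rr μ.re μ.im)^2)⁻¹ • (w.re • CMaux.Qx μ.re μ.im + w.im • CMaux.Qy μ.re μ.im) := by
      intro w
      rw [CMaux.DE_apply, CMaux.Exm_eq, CMaux.Eym_eq, smul_comm w.re, smul_comm w.im, ← smul_add]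
    rw [(CMaux.hasFDerivAt_cm h).fderiv, CMaux.cm_inv h, er, CMaux.Einv_eq, hD, hD]
    simp only [Matrix.mul_smul, Matrix.smul_mul, smul_smul, Matrix.trace_smul, smul_eq_mul]
    rw [show CMaux.rr μ.re μ.im = 1 - μ.re^2 - μ.im^2 from rfl] at hr0 ⊢
    rw [CMaux.key]
    simp only [Complex.mul_re, Complex.conj_re, Complex.conj_im]
    field_simp
    ring
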